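/- arXiv:2108.02492 — 2 statements merged into one kernel-verified Lean document; each statement's English description precedes it below -/
import Mathlib

section
/- The implicit symplectic Euler step is symplectic (one-dimensional case): let H : ℝ² → ℝ be twice continuously differentiable and let Φ = (Q, P) : U → ℝ² be a differentiable map on an open set U ⊆ ℝ² satisfying Q(q,p) = q + h H_p(Q(q,p), p) and P(q,p) = p - h H_q(Q(q,p), p) for all (q,p) ∈ U. If 1 - h H_{qp}(Q(q,p),p) ≠ 0, then det Φ'(q,p) = 1. -/
open Matrix

/-- The implicit symplectic Euler step is symplectic (1D case): if `Φ = (Q, P)` on an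
open set `U` satisfies `Q = q + h H_p(Q, p)`, `P = p - h H_q(Q, p)` and
`1 - h H_{qp}(Q, p) ≠ 0`, then `det Φ' = 1`. -/
theorem stmt_11 (H : ℝ × ℝ → ℝ) (hH : ContDiff ℝ 2 H) (h : ℝ)
    (U : Set (ℝ × ℝ)) (hU : IsOpen U)
    (Q P : ℝ × ℝ → ℝ)
    (hΦd : ∀ z ∈ U, DifferentiableAt ℝ (fun w => (Q w, P w)) z)
    (hQ : ∀ z ∈ U, Q z = z.1 + h * fderiv ℝ H (Q z, z.2) (0, 1))
    (hP : ∀ z ∈ U, P z = z.2 - h * fderiv ℝ H (Q z, z.2) (1, 0))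
    (z : ℝ × ℝ) (hz : z ∈ U)
    (hreg : 1 - h * fderiv ℝ (fun x => fderiv ℝ H x (0, 1)) (Q z, z.2) (1, 0) ≠ 0) :
    (!![(fderiv ℝ (fun w => (Q w, P w)) z (1, 0)).1,
        (fderiv ℝ (fun w => (Q w, P w)) z (0, 1)).1;
        (fderiv ℝ (fun w => (Q w, P w)) z (1, 0)).2,
        (fderiv ℝ (fun w => (Q w, P w)) z (0, 1)).2]).det = 1 := by
  classical
  set DΦ := fderiv ℝ (fun w => (Q w, P w)) z with hDΦ
  have hΦ : HasFDerivAt (fun w => (Q w, P w)) DΦ z := (hΦd z hz).hasFDerivAt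
  -- derivatives of components
  have hQ' : HasFDerivAt Q ((ContinuousLinearMap.fst ℝ ℝ ℝ).comp DΦ) z := hΦ.fst
  have hP' : HasFDerivAt P ((ContinuousLinearMap.snd ℝ ℝ ℝ).comp DΦ) z := hΦ.snd
  set pt : ℝ × ℝ := (Q z, z.2) with hpt
  -- H_p and H_q as functions
  set Hp : ℝ × ℝ → ℝ := fun x => fderiv ℝ H x (0, 1) with hHp
  set Hq : ℝ × ℝ → ℝ := fun x => fderiv ℝ H x (1, 0) with hHq
  have hH1 : ContDiff ℝ 1 (fderiv ℝ H) := hH.fderiv_right (by norm_num)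
  have hHd : Differentiable ℝ (fderiv ℝ H) := hH1.differentiable one_ne_zero
  have hHpd : DifferentiableAt ℝ Hp pt :=
    ((hHd pt).clm_apply (differentiableAt_const _))
  have hHqd : DifferentiableAt ℝ Hq pt :=
    ((hHd pt).clm_apply (differentiableAt_const _))
  have hfHp : fderiv ℝ Hp pt = (fderiv ℝ (fderiv ℝ H) pt).flip (0, 1) := by
    rw [hHp, fderiv_clm_apply (hHd pt) (differentiableAt_const _)]
    simp
  have hfHq : fderiv ℝ Hq pt = (fderiv ℝ (fderiv ℝ H) pt).flip (1, 0) := by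
    rw [hHq, fderiv_clm_apply (hHd pt) (differentiableAt_const _)]
    simp
  -- symmetry of the second derivative
  have hsymm : fderiv ℝ (fderiv ℝ H) pt (1, 0) (0, 1)
      = fderiv ℝ (fderiv ℝ H) pt (0, 1) (1, 0) :=
    (hH.contDiffAt.isSymmSndFDerivAt (by norm_num)) _ _
  -- the inner map F w = (Q w, w.2)
  set LF : (ℝ × ℝ) →L[ℝ] (ℝ × ℝ) :=
    ((ContinuousLinearMap.fst ℝ ℝ ℝ).comp DΦ).prod (ContinuousLinearMap.snd ℝ ℝ ℝ) with hLF
  have hF : HasFDerivAt (fun w : ℝ × ℝ => (Q w, w.2)) LF z := HasFDerivAt.prodMk hQ' (hasFDerivAt_snd)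
  have hgp : HasFDerivAt (fun w : ℝ × ℝ => Hp (Q w, w.2)) ((fderiv ℝ Hp pt).comp LF) z :=
    HasFDerivAt.comp (g := Hp) z (hHpd.hasFDerivAt) hF
  have hgq : HasFDerivAt (fun w : ℝ × ℝ => Hq (Q w, w.2)) ((fderiv ℝ Hq pt).comp LF) z :=
    HasFDerivAt.comp (g := Hq) z (hHqd.hasFDerivAt) hF
  -- derivative of the right-hand sides
  have hRQ : HasFDerivAt (fun w : ℝ × ℝ => w.1 + h * Hp (Q w, w.2))
      ((ContinuousLinearMap.fst ℝ ℝ ℝ) + h • ((fderiv ℝ Hp pt).comp LF)) z :=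
    (hasFDerivAt_fst).add (hgp.const_mul h)
  have hRP : HasFDerivAt (fun w : ℝ × ℝ => w.2 - h * Hq (Q w, w.2))
      ((ContinuousLinearMap.snd ℝ ℝ ℝ) - h • ((fderiv ℝ Hq pt).comp LF)) z :=
    (hasFDerivAt_snd).sub (hgq.const_mul h)
  -- Q and P agree with the RHS near z
  have hQev : Q =ᶠ[nhds z] (fun w : ℝ × ℝ => w.1 + h * Hp (Q w, w.2)) :=
    Filter.eventuallyEq_of_mem (hU.mem_nhds hz) (fun w hw => hQ w hw)
  have hPev : P =ᶠ[nhds z] (fun w : ℝ × ℝ => w.2 - h * Hq (Q w, w.2)) :=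
    Filter.eventuallyEq_of_mem (hU.mem_nhds hz) (fun w hw => hP w hw)
  have hQ'' : HasFDerivAt Q
      ((ContinuousLinearMap.fst ℝ ℝ ℝ) + h • ((fderiv ℝ Hp pt).comp LF)) z :=
    hRQ.congr_of_eventuallyEq hQev
  have hP'' : HasFDerivAt P
      ((ContinuousLinearMap.snd ℝ ℝ ℝ) - h • ((fderiv ℝ Hq pt).comp LF)) z :=
    hRP.congr_of_eventuallyEq hPev
  have hQeq := hQ'.unique hQ''
  have hPeq := hP'.unique hP''
  -- scalar notations
  set a : ℝ := (DΦ (1, 0)).1 with ha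
  set b : ℝ := (DΦ (0, 1)).1 with hb
  set c : ℝ := (DΦ (1, 0)).2 with hc
  set d : ℝ := (DΦ (0, 1)).2 with hd
  set A : ℝ := fderiv ℝ (fderiv ℝ H) pt (1, 0) (0, 1) with hA
  set B : ℝ := fderiv ℝ (fderiv ℝ H) pt (0, 1) (0, 1) with hB
  set C : ℝ := fderiv ℝ (fderiv ℝ H) pt (1, 0) (1, 0) with hC
  set D : ℝ := fderiv ℝ (fderiv ℝ H) pt (0, 1) (1, 0) with hD
  have expand : ∀ (L : (ℝ × ℝ) →L[ℝ] ℝ) (x y : ℝ), L (x, y) = x * L (1, 0) + y * L (0, 1) := by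
    intro L x y
    have hxy : ((x, y) : ℝ × ℝ) = x • ((1:ℝ), (0:ℝ)) + y • ((0:ℝ), (1:ℝ)) := by
      simp [Prod.ext_iff]
    rw [hxy, map_add, L.map_smul, L.map_smul]; simp
  have sA : fderiv ℝ Hp pt (1, 0) = A := by rw [hfHp]; simp [hA]
  have sB : fderiv ℝ Hp pt (0, 1) = B := by rw [hfHp]; simp [hB]
  have sC : fderiv ℝ Hq pt (1, 0) = C := by rw [hfHq]; simp [hC]
  have sD : fderiv ℝ Hq pt (0, 1) = D := by rw [hfHq]; simp [hD]
  have LF10 : LF (1, 0) = (a, 0) := by simp [hLF, ha]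
  have LF01 : LF (0, 1) = (b, 1) := by simp [hLF, hb]
  have e1 : a = 1 + h * (a * A) := by
    have h0 := congrArg (fun L : (ℝ × ℝ) →L[ℝ] ℝ => L (1, 0)) hQeq
    simp only [ContinuousLinearMap.add_apply, ContinuousLinearMap.coe_fst',
      ContinuousLinearMap.smul_apply, ContinuousLinearMap.coe_comp', Function.comp_apply,
      smul_eq_mul] at h0
    rw [LF10, expand _ a 0, sA, sB] at h0
    linear_combination h0
  have e2 : b = h * (b * A + B) := by
    have h0 := congrArg (fun L : (ℝ × ℝ) →L[ℝ] ℝ => L (0, 1)) hQeq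
    simp only [ContinuousLinearMap.add_apply, ContinuousLinearMap.coe_fst',
      ContinuousLinearMap.smul_apply, ContinuousLinearMap.coe_comp', Function.comp_apply,
      smul_eq_mul] at h0
    rw [LF01, expand _ b 1, sA, sB] at h0
    linear_combination h0
  have e3 : c = -(h * (a * C)) := by
    have h0 := congrArg (fun L : (ℝ × ℝ) →L[ℝ] ℝ => L (1, 0)) hPeq
    simp only [ContinuousLinearMap.sub_apply, ContinuousLinearMap.coe_snd',
      ContinuousLinearMap.smul_apply, ContinuousLinearMap.coe_comp', Function.comp_apply,
      smul_eq_mul] at h0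
    rw [LF10, expand _ a 0, sC, sD] at h0
    linear_combination h0
  have e4 : d = 1 - h * (b * C + D) := by
    have h0 := congrArg (fun L : (ℝ × ℝ) →L[ℝ] ℝ => L (0, 1)) hPeq
    simp only [ContinuousLinearMap.sub_apply, ContinuousLinearMap.coe_snd',
      ContinuousLinearMap.smul_apply, ContinuousLinearMap.coe_comp', Function.comp_apply,
      smul_eq_mul] at h0
    rw [LF01, expand _ b 1, sC, sD] at h0
    linear_combination h0
  rw [Matrix.det_fin_two_of]
  show a * d - b * c = 1
  rw [e3, e4]
  linear_combination e1 + h * a * hsymm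
end

section
/- A type-2 generating function produces a symplectic map (one-dimensional case): let S : ℝ² → ℝ be twice continuously differentiable and let Φ = (Q, P) : U → ℝ² be a differentiable map on an open set U ⊆ ℝ² such that for all (q,p) ∈ U: p = ∂₁S(q, P(q,p)) and Q(q,p) = ∂₂S(q, P(q,p)), and ∂₁∂₂S(q, P(q,p)) ≠ 0. Then det Φ'(q,p) = 1 for all (q,p) ∈ U. -/
open Matrix

/-- A type-2 generating function produces a symplectic map (1D case): if `Φ = (Q, P)` on
an open set `U` satisfies `p = ∂₁S(q, P)`, `Q = ∂₂S(q, P)` with `∂₁∂₂S(q, P) ≠ 0`,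
then `det Φ' = 1` on `U`. -/
theorem stmt_12 (S : ℝ × ℝ → ℝ) (hS : ContDiff ℝ 2 S)
    (U : Set (ℝ × ℝ)) (hU : IsOpen U)
    (Q P : ℝ × ℝ → ℝ)
    (hΦd : ∀ z ∈ U, DifferentiableAt ℝ (fun w => (Q w, P w)) z)
    (hp : ∀ z ∈ U, z.2 = fderiv ℝ S (z.1, P z) (1, 0))
    (hQ : ∀ z ∈ U, Q z = fderiv ℝ S (z.1, P z) (0, 1))
    (hreg : ∀ z ∈ U, fderiv ℝ (fun x => fderiv ℝ S x (0, 1)) (z.1, P z) (1, 0) ≠ 0) :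
    ∀ z ∈ U,
      (!![(fderiv ℝ (fun w => (Q w, P w)) z (1, 0)).1,
          (fderiv ℝ (fun w => (Q w, P w)) z (0, 1)).1;
          (fderiv ℝ (fun w => (Q w, P w)) z (1, 0)).2,
          (fderiv ℝ (fun w => (Q w, P w)) z (0, 1)).2]).det = 1 := by
  intro z hz
  have hU' : U ∈ nhds z := hU.mem_nhds hz
  have hΦ := hΦd z hz
  have hQd : DifferentiableAt ℝ Q z := hΦ.fst
  have hPd : DifferentiableAt ℝ P z := hΦ.snd
  set x₀ : ℝ × ℝ := (z.1, P z) with hx₀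
  have hS' : ContDiff ℝ 1 (fun y => fderiv ℝ S y) := hS.fderiv_right (by norm_num)
  set D2 := fderiv ℝ (fun y => fderiv ℝ S y) x₀ with hD2def
  have hD2 : HasFDerivAt (fun y => fderiv ℝ S y) D2 x₀ :=
    (hS'.differentiable one_ne_zero x₀).hasFDerivAt
  set G' := (ContinuousLinearMap.fst ℝ ℝ ℝ).prod (fderiv ℝ P z) with hG'
  have hG : HasFDerivAt (fun w : ℝ × ℝ => (w.1, P w)) G' z :=
    HasFDerivAt.prodMk hasFDerivAt_fst hPd.hasFDerivAt
  have hcomp : HasFDerivAt (fun w : ℝ × ℝ => fderiv ℝ S (w.1, P w)) (D2.comp G') z :=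
    hD2.comp z hG
  have hev : ∀ v0 : ℝ × ℝ, HasFDerivAt (fun w : ℝ × ℝ => fderiv ℝ S (w.1, P w) v0)
      ((ContinuousLinearMap.apply ℝ ℝ v0).comp (D2.comp G')) z :=
    fun v0 => ((ContinuousLinearMap.apply ℝ ℝ v0).hasFDerivAt).comp z hcomp
  have hsymm : ∀ v w : ℝ × ℝ, D2 v w = D2 w v := by
    intro v w
    exact (hS.contDiffAt.isSymmSndFDerivAt (by norm_num)) v w
  -- derivative of the identity p = ∂₁S(q, P)
  have hp' : HasFDerivAt (fun w : ℝ × ℝ => w.2)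
      ((ContinuousLinearMap.apply ℝ ℝ ((1:ℝ),(0:ℝ))).comp (D2.comp G')) z := by
    apply (hev (1,0)).congr_of_eventuallyEq
    filter_upwards [hU'] with w hw
    exact hp w hw
  have huniq := hp'.unique (hasFDerivAt_snd)
  have hkey : D2 (G' (0,1)) (1,0) = 1 := by
    have := congrArg (fun L : (ℝ × ℝ) →L[ℝ] ℝ => L ((0:ℝ),(1:ℝ))) huniq
    simpa using this
  -- derivative of Q
  have hQ' : HasFDerivAt Q ((ContinuousLinearMap.apply ℝ ℝ ((0:ℝ),(1:ℝ))).comp (D2.comp G')) z := by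
    apply (hev (0,1)).congr_of_eventuallyEq
    filter_upwards [hU'] with w hw
    exact hQ w hw
  have hfd : fderiv ℝ (fun w => (Q w, P w)) z = (fderiv ℝ Q z).prod (fderiv ℝ P z) :=
    hQd.fderiv_prodMk hPd
  rw [Matrix.det_fin_two_of, hfd]
  simp only [ContinuousLinearMap.prod_apply, hQ'.fderiv]
  set Pq := fderiv ℝ P z (1,0) with hPq
  set Pp := fderiv ℝ P z (0,1) with hPp
  have hG1 : G' ((1:ℝ),(0:ℝ)) = (1, Pq) := by simp [hG', hPq]
  have hG2 : G' ((0:ℝ),(1:ℝ)) = (0, Pp) := by simp [hG', hPp]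
  have e1 : ((1:ℝ), Pq) = ((1:ℝ),(0:ℝ)) + Pq • ((0:ℝ),(1:ℝ)) := by simp
  have e2 : ((0:ℝ), Pp) = Pp • ((0:ℝ),(1:ℝ)) := by simp
  have hkey' : Pp * D2 ((0:ℝ),(1:ℝ)) (1,0) = 1 := by
    rw [hG2, e2, ContinuousLinearMap.map_smul] at hkey
    simpa using hkey
  have hs := hsymm ((1:ℝ),(0:ℝ)) ((0:ℝ),(1:ℝ))
  simp only [ContinuousLinearMap.comp_apply, ContinuousLinearMap.apply_apply, hG1, hG2,
    e1, e2, map_add, ContinuousLinearMap.map_smul, ContinuousLinearMap.add_apply,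
    ContinuousLinearMap.smul_apply, smul_eq_mul]
  rw [hs]
  linear_combination hkey'
end
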